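/- Let E = [[Ẽ, 0],[0, 0]] be a (0,1,−1) matrix with zero row and column sums, partitioned conformally, and let A = [[Ã, X₁],[X₂, X₃]] be a (0,1) matrix with the same partition. Then A and A+E are Gram mates if and only if Ã and Ã+Ẽ are Gram mates, Ẽ X₂ᵀ = 0, and Ẽᵀ X₁ = 0. -/

import Mathlib

open Matrix

private lemma gram_aux {α β : Type*} [Fintype β] (M N : Matrix α β ℝ) :
    M * Mᵀ = (M + N) * (M + N)ᵀ ↔ M * Nᵀ + (N * Mᵀ + N * Nᵀ) = 0 := by
  have h : (M + N) * (M + N)ᵀ = M * Mᵀ + (M * Nᵀ + (N * Mᵀ + N * Nᵀ)) := by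
    rw [transpose_add, Matrix.add_mul, Matrix.mul_add, Matrix.mul_add, add_assoc]
  rw [h, left_eq_add]

private lemma gram_aux2 {α β : Type*} [Fintype α] (M N : Matrix α β ℝ) :
    Mᵀ * M = (M + N)ᵀ * (M + N) ↔ Mᵀ * N + (Nᵀ * M + Nᵀ * N) = 0 := by
  have h : (M + N)ᵀ * (M + N) = Mᵀ * M + (Mᵀ * N + (Nᵀ * M + Nᵀ * N)) := by
    rw [transpose_add, Matrix.add_mul, Matrix.mul_add, Matrix.mul_add, add_assoc]
  rw [h, left_eq_add]

private lemma ne_aux {α β : Type*} (M N : Matrix α β ℝ) :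
    M ≠ M + N ↔ N ≠ 0 := by
  rw [ne_eq, left_eq_add]

theorem stmt8 (m₁ m₂ n₁ n₂ : ℕ)
    (Et At : Matrix (Fin m₁) (Fin n₁) ℝ)
    (X₁ : Matrix (Fin m₁) (Fin n₂) ℝ)
    (X₂ : Matrix (Fin m₂) (Fin n₁) ℝ)
    (X₃ : Matrix (Fin m₂) (Fin n₂) ℝ)
    (hEt01 : ∀ i j, Et i j = 0 ∨ Et i j = 1 ∨ Et i j = -1)
    (hEt0 : Et ≠ 0)
    (hrow : (Matrix.fromBlocks Et 0 0 0 :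
      Matrix (Fin m₁ ⊕ Fin m₂) (Fin n₁ ⊕ Fin n₂) ℝ) *ᵥ (fun _ => 1) = 0)
    (hcol : (fun _ => 1) ᵥ* (Matrix.fromBlocks Et 0 0 0 :
      Matrix (Fin m₁ ⊕ Fin m₂) (Fin n₁ ⊕ Fin n₂) ℝ) = 0)
    (hA01 : ∀ i j, (Matrix.fromBlocks At X₁ X₂ X₃) i j = 0 ∨
      (Matrix.fromBlocks At X₁ X₂ X₃) i j = 1)
    (hAE01 : ∀ i j, (Matrix.fromBlocks At X₁ X₂ X₃ + Matrix.fromBlocks Et 0 0 0 :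
        Matrix (Fin m₁ ⊕ Fin m₂) (Fin n₁ ⊕ Fin n₂) ℝ) i j = 0 ∨
      (Matrix.fromBlocks At X₁ X₂ X₃ + Matrix.fromBlocks Et 0 0 0 :
        Matrix (Fin m₁ ⊕ Fin m₂) (Fin n₁ ⊕ Fin n₂) ℝ) i j = 1) :
    (let A := Matrix.fromBlocks At X₁ X₂ X₃
     let E : Matrix (Fin m₁ ⊕ Fin m₂) (Fin n₁ ⊕ Fin n₂) ℝ := Matrix.fromBlocks Et 0 0 0
     A * Aᵀ = (A + E) * (A + E)ᵀ ∧ Aᵀ * A = (A + E)ᵀ * (A + E) ∧ A ≠ A + E) ↔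
    ((At * Atᵀ = (At + Et) * (At + Et)ᵀ ∧ Atᵀ * At = (At + Et)ᵀ * (At + Et) ∧
        At ≠ At + Et) ∧
      Et * X₂ᵀ = 0 ∧ Etᵀ * X₁ = 0) := by
  simp only [gram_aux, gram_aux2, ne_aux]
  have h3 : (fromBlocks Et 0 0 0 : Matrix (Fin m₁ ⊕ Fin m₂) (Fin n₁ ⊕ Fin n₂) ℝ) ≠ 0 := by
    rw [← fromBlocks_zero, ne_eq, fromBlocks_inj]
    tauto
  have h1 : (fromBlocks At X₁ X₂ X₃ * (fromBlocks Et 0 0 0 : Matrix (Fin m₁ ⊕ Fin m₂) (Fin n₁ ⊕ Fin n₂) ℝ)ᵀ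
      + ((fromBlocks Et 0 0 0 : Matrix (Fin m₁ ⊕ Fin m₂) (Fin n₁ ⊕ Fin n₂) ℝ) * (fromBlocks At X₁ X₂ X₃)ᵀ
        + (fromBlocks Et 0 0 0 : Matrix (Fin m₁ ⊕ Fin m₂) (Fin n₁ ⊕ Fin n₂) ℝ) * (fromBlocks Et 0 0 0 : Matrix (Fin m₁ ⊕ Fin m₂) (Fin n₁ ⊕ Fin n₂) ℝ)ᵀ) = 0)
      ↔ (At * Etᵀ + (Et * Atᵀ + Et * Etᵀ) = 0 ∧ Et * X₂ᵀ = 0 ∧ X₂ * Etᵀ = 0) := by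
    simp only [fromBlocks_transpose, Matrix.transpose_zero, fromBlocks_multiply, fromBlocks_add, Matrix.mul_zero,
      Matrix.zero_mul, add_zero, zero_add]
    rw [← fromBlocks_zero, fromBlocks_inj]
    simp [and_assoc]
  have h2 : ((fromBlocks At X₁ X₂ X₃)ᵀ * (fromBlocks Et 0 0 0 : Matrix (Fin m₁ ⊕ Fin m₂) (Fin n₁ ⊕ Fin n₂) ℝ)
      + ((fromBlocks Et 0 0 0 : Matrix (Fin m₁ ⊕ Fin m₂) (Fin n₁ ⊕ Fin n₂) ℝ)ᵀ * fromBlocks At X₁ X₂ X₃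
        + (fromBlocks Et 0 0 0 : Matrix (Fin m₁ ⊕ Fin m₂) (Fin n₁ ⊕ Fin n₂) ℝ)ᵀ * (fromBlocks Et 0 0 0 : Matrix (Fin m₁ ⊕ Fin m₂) (Fin n₁ ⊕ Fin n₂) ℝ)) = 0)
      ↔ (Atᵀ * Et + (Etᵀ * At + Etᵀ * Et) = 0 ∧ Etᵀ * X₁ = 0 ∧ X₁ᵀ * Et = 0) := by
    simp only [fromBlocks_transpose, Matrix.transpose_zero, fromBlocks_multiply, fromBlocks_add, Matrix.mul_zero,
      Matrix.zero_mul, add_zero, zero_add]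
    rw [← fromBlocks_zero, fromBlocks_inj]
    simp [and_assoc]
  have ht1 : X₂ * Etᵀ = 0 ↔ Et * X₂ᵀ = 0 := by
    constructor <;> intro h <;>
      simpa using congrArg Matrix.transpose h
  have ht2 : X₁ᵀ * Et = 0 ↔ Etᵀ * X₁ = 0 := by
    constructor <;> intro h <;>
      simpa using congrArg Matrix.transpose h
  rw [h1, h2, ht1, ht2]
  simp only [ne_eq, hEt0, not_false_eq_true, h3]
  tauto
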